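/- Let {θ_t} have kernels k_t satisfying the size condition |k_t(x,y)| ≤ C t^α/(t+|x−y|)^{α+d} and the smoothness condition |k_t(x,y)−k_t(x',y')| ≤ C(|x−x'|^α+|y−y'|^α)/(t+|x−y|)^{α+d} when |x−x'|+|y−y'| < t. Let P be a dyadic cube with center x_P, let R be a dyadic cube with ℓ(P) < ℓ(R), and let φ be supported on P with ∫φ = 0. Then for all (x,t) with x ∈ R and t ∈ [ℓR/2, ℓR): |θ_t φ(x)| ≲ (√(ℓR·ℓP))^α / D(R,P)^{α+d} · ‖φ‖_{L¹}, where D(R,P) = ℓR + d(R,P) + ℓP. -/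

import Mathlib

open MeasureTheory ENNReal Set

structure DyadicCube (d : ℕ) where
  j : ℤ
  m : Fin d → ℤ

namespace DyadicCube

variable {d : ℕ}

/-- side length `2^{-j}` of the dyadic cube. -/
noncomputable def side (Q : DyadicCube d) : ℝ := 2 ^ (-Q.j)

/-- the dyadic cube `2^{-j}([0,1)^d + m)` as a subset of `ℝ^d`. -/
def toSet (Q : DyadicCube d) : Set (Fin d → ℝ) :=
  {x | ∀ i, (Q.m i : ℝ) * 2 ^ (-Q.j) ≤ x i ∧ x i < ((Q.m i : ℝ) + 1) * 2 ^ (-Q.j)}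

/-- the concentric triple `3Q`. -/
def triple (Q : DyadicCube d) : Set (Fin d → ℝ) :=
  {x | ∀ i, ((Q.m i : ℝ) - 1) * 2 ^ (-Q.j) ≤ x i ∧ x i < ((Q.m i : ℝ) + 2) * 2 ^ (-Q.j)}

/-- the centre of the cube. -/
noncomputable def center (Q : DyadicCube d) : Fin d → ℝ :=
  fun i => ((Q.m i : ℝ) + 1 / 2) * 2 ^ (-Q.j)

/-- the `k`-fold dyadic ancestor `Q^{(k)}`. -/
def ancestor (k : ℕ) (Q : DyadicCube d) : DyadicCube d :=
  ⟨Q.j - k, fun i => Int.fdiv (Q.m i) (2 ^ k)⟩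

/-- the `k`-grandchildren `ch_k(Q)`. -/
def children (k : ℕ) (Q : DyadicCube d) : Set (DyadicCube d) :=
  {P | P.j = Q.j + k ∧ P.toSet ⊆ Q.toSet}

/-- distance between two sets in the `ℓ^∞` metric of `ℝ^d`. -/
noncomputable def sdist (A B : Set (Fin d → ℝ)) : ℝ :=
  (⨅ a ∈ A, EMetric.infEdist a B).toReal

/-- average `⟨f⟩_A` of `f` over `A`. -/
noncomputable def avg (f : (Fin d → ℝ) → ℝ) (A : Set (Fin d → ℝ)) : ℝ :=
  (volume A).toReal⁻¹ * ∫ x in A, f x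

/-- average `⟨|f|⟩_A`. -/
noncomputable def avgAbs (f : (Fin d → ℝ) → ℝ) (A : Set (Fin d → ℝ)) : ℝ :=
  avg (fun x => |f x|) A

/-- `Q` is `r`-good with parameter `γ`. -/
def IsGood (r : ℕ) (γ : ℝ) (Q : DyadicCube d) : Prop :=
  ∀ P : DyadicCube d, 2 ^ r * Q.side ≤ P.side →
    Q.side ^ γ * P.side ^ (1 - γ) < sdist Q.toSet (frontier P.toSet)

/-- martingale (Haar) difference `Δ_Q f`. -/
noncomputable def mdiff (f : (Fin d → ℝ) → ℝ) (Q : DyadicCube d) (x : Fin d → ℝ) : ℝ :=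
  ∑' J : {J : DyadicCube d // J ∈ children 1 Q},
    Set.indicator J.1.toSet (fun _ => avg f J.1.toSet - avg f Q.toSet) x

/-- `Σ_ε ⟨f, h_Q^ε⟩² = ‖Δ_Q f‖_{L²}²`, the total squared Haar coefficient on `Q`. -/
noncomputable def haarSq (f : (Fin d → ℝ) → ℝ) (P : DyadicCube d) : ℝ :=
  ∫ x in P.toSet, (mdiff f P x) ^ 2

end DyadicCube

open DyadicCube

/-- Kernel estimate for small `P` (case `ℓP < ℓR` of Lemma `LM`): if the kernels `k_t` satisfy
the size and smoothness conditions with constant `C` and exponent `α ∈ (0,1]`, `φ` is supported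
on `P` with zero mean, then for `x ∈ R` and `t ∈ [ℓR/2, ℓR)`,
`|θ_t φ(x)| ≤ C' (√(ℓR ℓP))^α / D(R,P)^{α+d} ‖φ‖_{L¹}` with `C' = C'(C, α, d)`. -/
theorem theta_on_small_cube {d : ℕ} {α : ℝ} (hα : α ∈ Set.Ioc (0 : ℝ) 1)
    {C : ℝ} (hC : 0 < C) :
    ∃ C' > 0, ∀ (k : ℝ → (Fin d → ℝ) → (Fin d → ℝ) → ℝ),
      (∀ t x y, 0 < t → |k t x y| ≤ C * t ^ α / (t + dist x y) ^ (α + (d : ℝ))) →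
      (∀ t x x' y y', 0 < t → dist x x' + dist y y' < t →
        |k t x y - k t x' y'| ≤
          C * (dist x x' ^ α + dist y y' ^ α) / (t + dist x y) ^ (α + (d : ℝ))) →
      ∀ (P R : DyadicCube d), P.side < R.side →
      ∀ φ : (Fin d → ℝ) → ℝ, Integrable φ → Function.support φ ⊆ P.toSet →
        (∫ y, φ y) = 0 →
      ∀ x ∈ R.toSet, ∀ t ∈ Set.Ico (R.side / 2) R.side,
        |∫ y, k t x y * φ y| ≤
          C' * Real.sqrt (R.side * P.side) ^ α /
            (R.side + sdist R.toSet P.toSet + P.side) ^ (α + (d : ℝ)) * ∫ y, |φ y| := by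
  obtain ⟨hα0, hα1⟩ := hα
  refine ⟨C * 4 ^ (α + (d : ℝ)), by positivity, ?_⟩
  intro k hsize hsmooth P R hPR φ hφint hφsupp hφ0 x hx t ht
  obtain ⟨ht1, ht2⟩ := ht
  have hRpos : 0 < R.side := by unfold DyadicCube.side; positivity
  have hPpos : 0 < P.side := by unfold DyadicCube.side; positivity
  have htpos : 0 < t := lt_of_lt_of_le (by linarith) ht1
  have hsd0 : 0 ≤ sdist R.toSet P.toSet := ENNReal.toReal_nonneg
  set D : ℝ := R.side + sdist R.toSet P.toSet + P.side with hDdef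
  have hDpos : 0 < D := by positivity
  set S : ℝ := Real.sqrt (R.side * P.side) with hSdef
  have hSpos : 0 < S := Real.sqrt_pos.2 (by positivity)
  set M : ℝ := C * 4 ^ (α + (d : ℝ)) * S ^ α / D ^ (α + (d : ℝ)) with hMdef
  have hMpos : 0 < M := by positivity
  have hPS : P.side ≤ S := by
    rw [hSdef]
    nlinarith [Real.sq_sqrt (show (0:ℝ) ≤ R.side * P.side by positivity),
      Real.sqrt_nonneg (R.side * P.side)]
  -- pointwise bound for the modified kernel
  have key : ∀ y, |(k t x y - k t x P.center) * φ y| ≤ M * |φ y| := by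
    intro y
    by_cases hy : φ y = 0
    · simp [hy]
    have hyP : y ∈ P.toSet := hφsupp (Function.mem_support.2 hy)
    have hdy : dist y P.center ≤ P.side / 2 := by
      rw [dist_pi_le_iff (by positivity)]
      intro i
      obtain ⟨h1, h2⟩ := hyP i
      have hc : P.center i = ((P.m i : ℝ) + 1 / 2) * 2 ^ (-P.j) := rfl
      have hs : P.side = (2:ℝ) ^ (-P.j) := rfl
      rw [Real.dist_eq, abs_le, hc, hs]
      constructor <;> nlinarith
    have hsmall : dist x x + dist y P.center < t := by
      rw [dist_self]
      have : P.side / 2 < t := by linarith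
      linarith
    have hk := hsmooth t x x y P.center htpos hsmall
    rw [dist_self, Real.zero_rpow hα0.ne', zero_add] at hk
    -- numerator bound
    have hnum : dist y P.center ^ α ≤ S ^ α :=
      Real.rpow_le_rpow dist_nonneg (by linarith) hα0.le
    -- sdist ≤ dist x y
    have hsdle : sdist R.toSet P.toSet ≤ dist x y := by
      have h1 : (⨅ a ∈ R.toSet, EMetric.infEdist a P.toSet) ≤ edist x y :=
        le_trans (biInf_le _ hx) (EMetric.infEdist_le_edist_of_mem hyP)
      have := ENNReal.toReal_mono (edist_ne_top x y) h1
      rwa [← dist_edist] at this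
    have hden0 : D / 4 ≤ t + dist x y := by
      have hdn : 0 ≤ dist x y := dist_nonneg
      rw [hDdef]
      linarith
    have hexp : (0:ℝ) ≤ α + (d : ℝ) := by positivity
    have hden : D ^ (α + (d:ℝ)) / 4 ^ (α + (d:ℝ)) ≤ (t + dist x y) ^ (α + (d:ℝ)) := by
      rw [← Real.div_rpow hDpos.le (by norm_num : (0:ℝ) ≤ 4)]
      exact Real.rpow_le_rpow (by positivity) hden0 hexp
    have hkM : |k t x y - k t x P.center| ≤ M := by
      refine le_trans hk ?_
      have h4pos : (0:ℝ) < 4 ^ (α + (d:ℝ)) := by positivity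
      have hDp : (0:ℝ) < D ^ (α + (d:ℝ)) := by positivity
      have step : C * dist y P.center ^ α / (t + dist x y) ^ (α + (d:ℝ)) ≤
          (C * S ^ α) / (D ^ (α + (d:ℝ)) / 4 ^ (α + (d:ℝ))) := by
        apply div_le_div₀ (by positivity) ?_ (by positivity) hden
        exact mul_le_mul_of_nonneg_left hnum hC.le
      refine le_trans step (le_of_eq ?_)
      rw [hMdef]
      field_simp
    rw [abs_mul]
    exact mul_le_mul_of_nonneg_right hkM (abs_nonneg _)
  have hφabs : (0:ℝ) ≤ ∫ y, |φ y| := integral_nonneg fun y => abs_nonneg _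
  by_cases hint : Integrable (fun y => k t x y * φ y)
  · have hcφ : Integrable (fun y => k t x P.center * φ y) := hφint.const_mul _
    have hint2 : Integrable (fun y => (k t x y - k t x P.center) * φ y) := by
      simpa [sub_mul] using (hint.sub hcφ : Integrable (fun y => k t x y * φ y - k t x P.center * φ y))
    have heq : (∫ y, k t x y * φ y) = ∫ y, (k t x y - k t x P.center) * φ y := by
      have h1 : (∫ y, (k t x y * φ y - k t x P.center * φ y)) =
          (∫ y, k t x y * φ y) - ∫ y, k t x P.center * φ y := integral_sub hint hcφ
      have h2 : (∫ y, k t x P.center * φ y) = k t x P.center * ∫ y, φ y :=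
        integral_const_mul _ _
      rw [h2, hφ0, mul_zero, sub_zero] at h1
      simpa [sub_mul] using h1.symm
    rw [heq]
    calc |∫ y, (k t x y - k t x P.center) * φ y|
        ≤ ∫ y, |(k t x y - k t x P.center) * φ y| := by
          have := norm_integral_le_integral_norm (μ := volume)
            (fun y => (k t x y - k t x P.center) * φ y)
          simpa [Real.norm_eq_abs, abs_mul] using this
      _ ≤ ∫ y, M * |φ y| := by
          refine integral_mono_of_nonneg (Filter.Eventually.of_forall fun y => abs_nonneg _)
            ((hφint.abs).const_mul M) (Filter.Eventually.of_forall key)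
      _ = M * ∫ y, |φ y| := integral_const_mul _ _
      _ = C * 4 ^ (α + (d:ℝ)) * S ^ α / D ^ (α + (d:ℝ)) * ∫ y, |φ y| := by rw [hMdef]
      _ ≤ _ := by
          apply mul_le_mul_of_nonneg_right _ hφabs
          apply le_of_eq
          ring
  · rw [integral_undef hint, abs_zero]
    positivity
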